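/- arXiv:0905.3140 — 5 statements merged into one kernel-verified Lean document; each statement's English description precedes it below -/
import Mathlib

section
/- Let d ≥ 1 be an integer, let u > 0 be a real number, let φ : ℝ^d → ℂ be a Schwartz function, and let y ∈ ℝ^d. Then the functions x ↦ φ(y + 2x/|x|²)·(|x|²/2)^{-d(1+u)/2} and x ↦ φ(y + x)·(|x|²/2)^{-d(1-u)/2} are both Lebesgue integrable on ℝ^d, and ∫_{ℝ^d} φ(y + 2x/|x|²)·(|x|²/2)^{-d(1+u)/2} dx = ∫_{ℝ^d} φ(y + x)·(|x|²/2)^{-d(1-u)/2} dx. -/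
open MeasureTheory

open Measure Set Metric EuclideanGeometry

lemma integrable_fun_norm_of_radial {E : Type*} [NormedAddCommGroup E] [NormedSpace ℝ E]
    [MeasurableSpace E] [BorelSpace E] [FiniteDimensional ℝ E] [Nontrivial E]
    (μ : Measure E) [μ.IsAddHaarMeasure] {f : ℝ → ℝ} (hmeas : Measurable f)
    (hf : IntegrableOn (fun r : ℝ => f r * r ^ (Module.finrank ℝ E - 1)) (Set.Ioi 0)) :
    Integrable (fun x : E => f ‖x‖) μ := by
  set n := Module.finrank ℝ E - 1 with hn
  have hc : MeasurableSet ({(0:E)}ᶜ) := (measurableSet_singleton _).compl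
  have hIoi : MeasurableSet (Ioi (0:ℝ)) := measurableSet_Ioi
  have hpre : (Subtype.val : ({(0:E)}ᶜ : Set E) → E) ⁻¹' {(0:E)}ᶜ = Set.univ := by
    ext x; simpa using x.2
  have hpre' : (Subtype.val : (Ioi (0:ℝ)) → ℝ) ⁻¹' (Ioi 0) = Set.univ := by
    ext x; simpa using x.2
  rw [← restrict_compl_singleton (μ := μ) (0 : E)]
  show IntegrableOn _ _ _
  rw [(MeasurableEmbedding.subtype_coe hc).integrableOn_iff_comap (by rw [Subtype.range_coe]),
    hpre, integrableOn_univ]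
  have hcomp : ((fun x : E => f ‖x‖) ∘ (Subtype.val : ({(0:E)}ᶜ : Set E) → E))
      = (fun p : sphere (0:E) 1 × Ioi (0:ℝ) => f p.2.1) ∘ (homeomorphUnitSphereProd E) := by
    funext p; simp
  rw [hcomp, μ.measurePreserving_homeomorphUnitSphereProd.integrable_comp_emb
    (Homeomorph.measurableEmbedding _)]
  -- integrability wrt volumeIoiPow n
  have hint : Integrable (fun r : Ioi (0:ℝ) => f r.1) (volumeIoiPow n) := by
    rw [volumeIoiPow, integrable_withDensity_iff
      ((measurable_subtype_coe.pow_const n).ennreal_ofReal)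
      (ae_of_all _ fun r => ENNReal.ofReal_lt_top)]
    have h2 : (fun r : Ioi (0:ℝ) => f r.1 * (ENNReal.ofReal (r.1 ^ n)).toReal)
        = ((fun r : ℝ => f r * r ^ n) ∘ (Subtype.val)) := by
      funext r
      simp [ENNReal.toReal_ofReal (pow_nonneg r.2.out.le n)]
    rw [h2]
    have h3 := ((MeasurableEmbedding.subtype_coe hIoi).integrableOn_iff_comap
      (f := fun r : ℝ => f r * r ^ n) (μ := volume) (by rw [Subtype.range_coe])).mp hf
    rwa [hpre', integrableOn_univ] at h3
  -- product
  have hsnd : (fun p : sphere (0:E) 1 × Ioi (0:ℝ) => f p.2.1)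
      = (fun r : Ioi (0:ℝ) => f r.1) ∘ Prod.snd := rfl
  rw [hsnd, ← integrable_map_measure ?_ measurable_snd.aemeasurable]
  · rw [Measure.map_snd_prod]
    exact hint.smul_measure (measure_ne_top _ _)
  · rw [Measure.map_snd_prod]
    exact ((hmeas.comp measurable_subtype_coe).aestronglyMeasurable)

lemma schwartz_decay_bound {E : Type*} [NormedAddCommGroup E] [NormedSpace ℝ E]
    (φ : SchwartzMap E ℂ) (k : ℕ) :
    ∃ C : ℝ, 0 ≤ C ∧ ∀ z : E, ‖φ z‖ ≤ C * (1 + ‖z‖) ^ (-(k : ℝ)) := by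
  refine ⟨2 ^ k * (Finset.Iic (k, 0)).sup (fun m => SchwartzMap.seminorm ℝ m.1 m.2) φ,
    by positivity, fun z => ?_⟩
  have h := SchwartzMap.one_add_le_sup_seminorm_apply (𝕜 := ℝ) (m := (k, 0)) le_rfl le_rfl φ z
  rw [norm_iteratedFDeriv_zero] at h
  have h0 : (0:ℝ) < 1 + ‖z‖ := by positivity
  have hpow : (1 + ‖z‖) ^ (-(k:ℝ)) = ((1 + ‖z‖) ^ k)⁻¹ := by
    rw [Real.rpow_neg h0.le, Real.rpow_natCast]
  rw [hpow, mul_comm _ ((1 + ‖z‖) ^ k)⁻¹, ← div_eq_inv_mul, le_div_iff₀ (by positivity)]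
  linarith [h]

lemma schwartz_shift_bound {E : Type*} [NormedAddCommGroup E] [NormedSpace ℝ E]
    (φ : SchwartzMap E ℂ) (y : E) (k : ℕ) :
    ∃ C : ℝ, 0 ≤ C ∧ ∀ x : E, ‖φ (y + x)‖ ≤ C * (1 + ‖x‖) ^ (-(k : ℝ)) := by
  obtain ⟨C0, hC0, hb⟩ := schwartz_decay_bound φ k
  refine ⟨C0 * (1 + ‖y‖) ^ (k : ℝ), by positivity, fun x => ?_⟩
  have hx0 : (0:ℝ) < 1 + ‖x‖ := by positivity
  have hy0 : (0:ℝ) < 1 + ‖y‖ := by positivity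
  have h1 : (1 + ‖x‖) / (1 + ‖y‖) ≤ 1 + ‖y + x‖ := by
    rw [div_le_iff₀ hy0]
    have : ‖x‖ ≤ ‖y + x‖ + ‖y‖ := by
      calc ‖x‖ = ‖(y + x) - y‖ := by rw [add_sub_cancel_left]
      _ ≤ ‖y + x‖ + ‖y‖ := norm_sub_le _ _
    nlinarith [norm_nonneg (y + x), norm_nonneg y]
  have h2 : (1 + ‖y + x‖) ^ (-(k:ℝ)) ≤ ((1 + ‖x‖) / (1 + ‖y‖)) ^ (-(k:ℝ)) :=
    Real.rpow_le_rpow_of_nonpos (by positivity) h1 (by simp)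
  have h3 : ((1 + ‖x‖) / (1 + ‖y‖)) ^ (-(k:ℝ))
      = (1 + ‖y‖) ^ (k:ℝ) * (1 + ‖x‖) ^ (-(k:ℝ)) := by
    rw [Real.div_rpow hx0.le hy0.le, Real.rpow_neg hy0.le, div_eq_mul_inv, inv_inv, mul_comm]
  calc ‖φ (y + x)‖ ≤ C0 * (1 + ‖y + x‖) ^ (-(k:ℝ)) := hb _
  _ ≤ C0 * ((1 + ‖y‖) ^ (k:ℝ) * (1 + ‖x‖) ^ (-(k:ℝ))) := by
      rw [← h3]; exact mul_le_mul_of_nonneg_left h2 hC0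
  _ = C0 * (1 + ‖y‖) ^ (k:ℝ) * (1 + ‖x‖) ^ (-(k:ℝ)) := by ring

lemma aux1D {a k : ℝ} (ha : -1 < a) (hak : a - k < -1) (hk : 0 ≤ k) :
    IntegrableOn (fun r : ℝ => (1 + r) ^ (-k) * r ^ a) (Set.Ioi (0:ℝ)) := by
  have hsplit : Ioi (0:ℝ) = Ioc 0 1 ∪ Ioi 1 := (Ioc_union_Ioi_eq_Ioi zero_le_one).symm
  have hmeas : AEStronglyMeasurable (fun r : ℝ => (1 + r) ^ (-k) * r ^ a) volume := by
    exact (by fun_prop : Measurable (fun r : ℝ => (1 + r) ^ (-k) * r ^ a)).aestronglyMeasurable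
  rw [hsplit, integrableOn_union]
  constructor
  · have hint : IntegrableOn (fun r : ℝ => r ^ a) (Ioc (0:ℝ) 1) := by
      have : IntervalIntegrable (fun x : ℝ => x ^ a) volume 0 1 := intervalIntegral.intervalIntegrable_rpow' ha
      rwa [intervalIntegrable_iff_integrableOn_Ioc_of_le zero_le_one] at this
    refine hint.mono' hmeas.restrict ?_
    filter_upwards [ae_restrict_mem measurableSet_Ioc] with r hr
    have hr0 : 0 < r := hr.1
    rw [Real.norm_eq_abs, abs_of_nonneg (by positivity)]
    have h1 : (1 + r) ^ (-k) ≤ 1 :=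
      Real.rpow_le_one_of_one_le_of_nonpos (by linarith) (by linarith)
    nlinarith [Real.rpow_nonneg hr0.le a, Real.rpow_nonneg (by positivity : (0:ℝ) ≤ 1+r) (-k)]
  · have hint : IntegrableOn (fun r : ℝ => r ^ (a - k)) (Ioi (1:ℝ)) :=
      integrableOn_Ioi_rpow_of_lt hak one_pos
    refine hint.mono' hmeas.restrict ?_
    filter_upwards [ae_restrict_mem measurableSet_Ioi] with r hr
    have hr1 : (1:ℝ) < r := hr
    have hr0 : (0:ℝ) < r := by linarith
    rw [Real.norm_eq_abs, abs_of_nonneg (by positivity)]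
    have h1 : (1 + r) ^ (-k) ≤ r ^ (-k) :=
      Real.rpow_le_rpow_of_nonpos hr0 (by linarith) (by linarith)
    calc (1 + r) ^ (-k) * r ^ a ≤ r ^ (-k) * r ^ a :=
          mul_le_mul_of_nonneg_right h1 (Real.rpow_nonneg hr0.le a)
    _ = r ^ (a - k) := by rw [← Real.rpow_add hr0]; ring_nf

lemma key_integrable (d : ℕ) (hd : 1 ≤ d) {e : ℝ} (he : 2 * e < d)
    (φ : SchwartzMap (EuclideanSpace ℝ (Fin d)) ℂ) (y : EuclideanSpace ℝ (Fin d)) :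
    Integrable (fun x : EuclideanSpace ℝ (Fin d) =>
      φ (y + x) * ((((‖x‖ ^ 2 / 2) ^ (-e)) : ℝ) : ℂ)) := by
  haveI : Nontrivial (EuclideanSpace ℝ (Fin d)) := by
    refine nontrivial_of_ne (EuclideanSpace.single ⟨0, hd⟩ 1) 0 ?_
    intro h
    have := congrArg (fun v => v ⟨0, hd⟩) h
    simp [EuclideanSpace.single] at this
  set k : ℕ := ⌈(d:ℝ) - 2 * e⌉₊ + 1 with hkdef
  have hk1 : (d:ℝ) - 2 * e ≤ (⌈(d:ℝ) - 2 * e⌉₊ : ℝ) := Nat.le_ceil _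
  have hkR : (d:ℝ) - 2 * e + 1 ≤ (k : ℝ) := by
    rw [hkdef]; push_cast; linarith
  obtain ⟨C, hC, hb⟩ := schwartz_shift_bound φ y k
  set f : ℝ → ℝ := fun r => C * ((1 + r) ^ (-(k:ℝ)) * ((r ^ 2 / 2) ^ (-e))) with hf
  have ha : (-1 : ℝ) < (d:ℝ) - 1 - 2 * e := by linarith
  have hak : (d:ℝ) - 1 - 2 * e - k < -1 := by linarith
  have hrad : Integrable (fun x : EuclideanSpace ℝ (Fin d) => f ‖x‖) := by
    apply integrable_fun_norm_of_radial volume (by fun_prop)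
    rw [finrank_euclideanSpace_fin]
    have base := (aux1D ha hak (by positivity)).const_mul (C * 2 ^ e)
    apply IntegrableOn.congr_fun base ?_ measurableSet_Ioi
    intro r hr
    have hr0 : (0:ℝ) < r := hr
    have h1 : ((r ^ 2 / 2 : ℝ)) ^ (-e) = 2 ^ e * r ^ (-(2*e)) := by
      rw [Real.div_rpow (sq_nonneg r) (by norm_num), Real.rpow_neg (by norm_num : (0:ℝ) ≤ 2),
        div_eq_mul_inv, inv_inv, mul_comm]
      congr 1
      rw [← Real.rpow_natCast r 2, ← Real.rpow_mul hr0.le]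
      norm_num
    have h2 : (r : ℝ) ^ (d - 1 : ℕ) = r ^ ((d:ℝ) - 1) := by
      rw [← Real.rpow_natCast r (d-1), Nat.cast_sub hd, Nat.cast_one]
    have h3 : r ^ (-(2*e)) * r ^ ((d:ℝ) - 1) = r ^ ((d:ℝ) - 1 - 2*e) := by
      rw [← Real.rpow_add hr0]; ring_nf
    show C * 2 ^ e * ((1 + r) ^ (-(k:ℝ)) * r ^ ((d:ℝ) - 1 - 2*e))
        = C * ((1 + r) ^ (-(k:ℝ)) * ((r ^ 2 / 2) ^ (-e))) * r ^ (d - 1 : ℕ)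
    rw [h1, h2, ← h3]; ring
  apply hrad.mono'
  · apply Measurable.aestronglyMeasurable
    apply Measurable.mul
    · exact φ.continuous.measurable.comp (measurable_const.add measurable_id)
    · exact Complex.measurable_ofReal.comp (by fun_prop)
  · refine ae_of_all _ fun x => ?_
    rw [norm_mul, Complex.norm_real, Real.norm_eq_abs,
      abs_of_nonneg (Real.rpow_nonneg (by positivity) _)]
    have := mul_le_mul_of_nonneg_right (hb x) (Real.rpow_nonneg
      (by positivity : (0:ℝ) ≤ ‖x‖ ^ 2 / 2) (-e))
    calc ‖φ (y + x)‖ * (‖x‖ ^ 2 / 2) ^ (-e)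
        ≤ C * (1 + ‖x‖) ^ (-(k:ℝ)) * (‖x‖ ^ 2 / 2) ^ (-e) := this
    _ = f ‖x‖ := by rw [hf]; ring

lemma inv_det (d : ℕ) (x : EuclideanSpace ℝ (Fin d)) (hx : x ≠ 0) :
    |((((Real.sqrt 2 / dist x 0) ^ 2) •
      (Submodule.reflection (ℝ ∙ (x - 0))ᗮ : EuclideanSpace ℝ (Fin d) →L[ℝ] EuclideanSpace ℝ (Fin d))).det)|
      = (2 / ‖x‖ ^ 2) ^ d := by
  rw [ContinuousLinearMap.det]
  rw [ContinuousLinearMap.coe_smul, LinearMap.det_smul]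
  have hrefl : LinearMap.det ((Submodule.reflection (ℝ ∙ (x - 0))ᗮ :
      EuclideanSpace ℝ (Fin d) →L[ℝ] EuclideanSpace ℝ (Fin d)) :
      EuclideanSpace ℝ (Fin d) →ₗ[ℝ] EuclideanSpace ℝ (Fin d)) = -1 := by
    calc _ = LinearMap.det (Submodule.reflection ((ℝ ∙ (x - 0))ᗮ :
          Submodule ℝ (EuclideanSpace ℝ (Fin d)))).toLinearMap := rfl
    _ = -1 := by
        rw [Submodule.det_reflection, Submodule.orthogonal_orthogonal, sub_zero,
          finrank_span_singleton hx, pow_one]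
  rw [hrefl]
  rw [finrank_euclideanSpace_fin]
  rw [mul_neg_one, abs_neg, abs_pow, dist_zero_right]
  congr 1
  rw [abs_of_nonneg (by positivity), div_pow, Real.sq_sqrt (by norm_num)]

/-- Lemma 3.3 of the paper (with `d = n-1`): the intertwining integral identity
for the spherical principal series of `SO(n,1)`. -/
theorem intertwining_integral_identity (d : ℕ) (hd : 1 ≤ d) (u : ℝ) (hu : 0 < u)
    (φ : SchwartzMap (EuclideanSpace ℝ (Fin d)) ℂ)
    (y : EuclideanSpace ℝ (Fin d)) :
    Integrable (fun x : EuclideanSpace ℝ (Fin d) =>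
        φ (y + (2 / ‖x‖ ^ 2) • x) * ((((‖x‖ ^ 2 / 2) ^ (-((d : ℝ) * (1 + u) / 2))) : ℝ) : ℂ)) ∧
    Integrable (fun x : EuclideanSpace ℝ (Fin d) =>
        φ (y + x) * ((((‖x‖ ^ 2 / 2) ^ (-((d : ℝ) * (1 - u) / 2))) : ℝ) : ℂ)) ∧
    ∫ x : EuclideanSpace ℝ (Fin d),
        φ (y + (2 / ‖x‖ ^ 2) • x) * ((((‖x‖ ^ 2 / 2) ^ (-((d : ℝ) * (1 + u) / 2))) : ℝ) : ℂ)
      = ∫ x : EuclideanSpace ℝ (Fin d),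
          φ (y + x) * ((((‖x‖ ^ 2 / 2) ^ (-((d : ℝ) * (1 - u) / 2))) : ℝ) : ℂ) := by
  haveI : Nontrivial (EuclideanSpace ℝ (Fin d)) := by
    refine nontrivial_of_ne (EuclideanSpace.single ⟨0, hd⟩ 1) 0 ?_
    intro h
    have := congrArg norm h
    rw [EuclideanSpace.norm_single, norm_zero] at this
    norm_num at this
  have hd0 : (0:ℝ) < d := by exact_mod_cast hd
  set e₁ : ℝ := (d : ℝ) * (1 + u) / 2 with he₁
  set e₂ : ℝ := (d : ℝ) * (1 - u) / 2 with he₂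
  set F : EuclideanSpace ℝ (Fin d) → ℂ :=
    fun x => φ (y + (2 / ‖x‖ ^ 2) • x) * (((‖x‖ ^ 2 / 2) ^ (-e₁) : ℝ) : ℂ) with hF
  set g : EuclideanSpace ℝ (Fin d) → ℂ :=
    fun x => φ (y + x) * (((‖x‖ ^ 2 / 2) ^ (-e₂) : ℝ) : ℂ) with hg
  have hR : Real.sqrt 2 ≠ 0 := by positivity
  set T : EuclideanSpace ℝ (Fin d) → EuclideanSpace ℝ (Fin d) :=
    inversion (0 : EuclideanSpace ℝ (Fin d)) (Real.sqrt 2) with hT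
  set s : Set (EuclideanSpace ℝ (Fin d)) := {(0 : EuclideanSpace ℝ (Fin d))}ᶜ with hsdef
  have hs : MeasurableSet s := (measurableSet_singleton _).compl
  set f' : EuclideanSpace ℝ (Fin d) → (EuclideanSpace ℝ (Fin d) →L[ℝ] EuclideanSpace ℝ (Fin d)) :=
    fun x => ((Real.sqrt 2 / dist x 0) ^ 2) •
      (Submodule.reflection (ℝ ∙ (x - 0))ᗮ : EuclideanSpace ℝ (Fin d) →L[ℝ] EuclideanSpace ℝ (Fin d)) with hf'
  have hT' : ∀ x ∈ s, HasFDerivWithinAt T (f' x) s x := fun x hx =>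
    (hasFDerivAt_inversion (Set.mem_compl_singleton_iff.mp hx)).hasFDerivWithinAt
  have hinj : Set.InjOn T s := (inversion_injective (0 : EuclideanSpace ℝ (Fin d)) hR).injOn
  have himg : T '' s = s := by
    rw [hsdef, hT, Set.image_compl_eq (inversion_bijective (0 : EuclideanSpace ℝ (Fin d)) hR),
      Set.image_singleton, inversion_self]
  have hTeq : ∀ x : EuclideanSpace ℝ (Fin d), T x = (2 / ‖x‖ ^ 2) • x := by
    intro x
    show inversion (0 : EuclideanSpace ℝ (Fin d)) (Real.sqrt 2) x = (2 / ‖x‖ ^ 2) • x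
    rw [inversion_def]
    simp only [vsub_eq_sub, vadd_eq_add, dist_zero_right, sub_zero, add_zero, div_pow,
      Real.sq_sqrt (by norm_num : (0:ℝ) ≤ 2)]
  have hnormT : ∀ x : EuclideanSpace ℝ (Fin d), x ≠ 0 → ‖T x‖ ^ 2 / 2 = 2 / ‖x‖ ^ 2 := by
    intro x hx
    have h1 : dist (T x) 0 = (Real.sqrt 2) ^ 2 / dist x 0 := dist_inversion_center 0 x _
    rw [dist_zero_right, dist_zero_right, Real.sq_sqrt (by norm_num : (0:ℝ) ≤ 2)] at h1
    rw [h1, div_pow]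
    have hx0 : ‖x‖ ≠ 0 := norm_ne_zero_iff.mpr hx
    field_simp
  have hpoint : ∀ x ∈ s, F x = |(f' x).det| • g (T x) := by
    intro x hx
    have hxne : x ≠ 0 := Set.mem_compl_singleton_iff.mp hx
    have hdet := inv_det d x hxne
    set t : ℝ := 2 / ‖x‖ ^ 2 with htdef
    have ht : 0 < t := by
      have : 0 < ‖x‖ := norm_pos_iff.mpr hxne
      positivity
    show φ (y + (2 / ‖x‖ ^ 2) • x) * (((‖x‖ ^ 2 / 2) ^ (-e₁) : ℝ) : ℂ)
      = |(f' x).det| • (φ (y + T x) * (((‖T x‖ ^ 2 / 2) ^ (-e₂) : ℝ) : ℂ))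
    rw [hdet, hnormT x hxne, hTeq x, Complex.real_smul]
    have hsc : ((‖x‖ ^ 2 / 2) ^ (-e₁) : ℝ) = (t ^ d : ℝ) * t ^ (-e₂) := by
      have hxinv : ‖x‖ ^ 2 / 2 = t⁻¹ := by rw [htdef, inv_div]
      rw [hxinv, Real.inv_rpow ht.le, ← Real.rpow_natCast t d, ← Real.rpow_neg ht.le,
        ← Real.rpow_add ht]
      rw [neg_neg]
      congr 1
      rw [he₁, he₂]; ring
    rw [hsc]
    push_cast
    ring
  have hg_int : Integrable g := by
    apply key_integrable d hd ?_ φ y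
    rw [he₂]
    nlinarith
  have hiff := integrableOn_image_iff_integrableOn_abs_det_fderiv_smul volume hs hT' hinj g
  rw [himg] at hiff
  have hFs : IntegrableOn (fun x => |(f' x).det| • g (T x)) s := hiff.mp hg_int.integrableOn
  have hF_int : Integrable F := by
    rw [← restrict_compl_singleton (μ := (volume : Measure (EuclideanSpace ℝ (Fin d))))
      (0 : EuclideanSpace ℝ (Fin d))]
    exact IntegrableOn.congr_fun hFs (fun x hx => (hpoint x hx).symm) hs
  refine ⟨hF_int, hg_int, ?_⟩
  calc ∫ x, F x = ∫ x in s, F x := by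
        rw [hsdef, restrict_compl_singleton]
  _ = ∫ x in s, |(f' x).det| • g (T x) := setIntegral_congr_fun hs (fun x hx => hpoint x hx)
  _ = ∫ x in T '' s, g x :=
        (integral_image_eq_integral_abs_det_fderiv_smul volume hs hT' hinj g).symm
  _ = ∫ x in s, g x := by rw [himg]
  _ = ∫ x, g x := by rw [hsdef, restrict_compl_singleton]
end

section
/- Let n ≥ 3 be an integer, let 1/(n−1) < u < 1 be real, and set u' = ((n−1)u − 1)/(n−2). Then C_u := ∫_ℝ (1+t²)^{-(n-1)u/2} dt is finite, and for every measurable function φ : ℝ^{n-2} → ℂ one has the identity in [0, ∞]: ∫_{ℝ^{n-2} × ℝ} |φ(y)|² (|y|² + t²)^{-(n-1)u/2} dy dt = C_u · ∫_{ℝ^{n-2}} |φ(y)|² |y|^{-(n-2)u'} dy. -/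
open MeasureTheory
open scoped ENNReal NNReal

theorem aux_scale (s : ℝ) {c : ℝ} (hc : 0 < c) :
    ∫ t : ℝ, (c ^ 2 + t ^ 2) ^ (-s) = c ^ (1 - 2 * s) * ∫ t : ℝ, (1 + t ^ 2) ^ (-s) := by
  have hpt : ∀ t : ℝ, (c ^ 2 + t ^ 2) ^ (-s)
      = (c ^ 2) ^ (-s) * (1 + (c⁻¹ * t) ^ 2) ^ (-s) := by
    intro t
    rw [← Real.mul_rpow (by positivity) (by positivity)]
    congr 1
    field_simp
  simp_rw [hpt]
  rw [integral_const_mul, MeasureTheory.Measure.integral_comp_mul_left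
      (fun t : ℝ => (1 + t ^ 2) ^ (-s)) c⁻¹]
  rw [abs_of_pos (by positivity : (0:ℝ) < c⁻¹⁻¹), inv_inv, smul_eq_mul, ← mul_assoc]
  congr 1
  rw [← Real.rpow_natCast c 2, ← Real.rpow_mul hc.le,
    show ((2:ℕ):ℝ) * (-s) = 2 * (-s) by norm_num,
    show (1 - 2 * s) = 2 * (-s) + 1 by ring, Real.rpow_add hc, Real.rpow_one]

theorem aux_int (s : ℝ) (hC : Integrable (fun t : ℝ => (1 + t ^ 2) ^ (-s)))
    {c : ℝ} (hc : 0 < c) :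
    Integrable (fun t : ℝ => (c ^ 2 + t ^ 2) ^ (-s)) := by
  have h := (hC.comp_mul_left' (inv_ne_zero hc.ne')).const_mul ((c ^ 2) ^ (-s))
  refine h.congr (ae_of_all _ fun t => ?_)
  show (c ^ 2) ^ (-s) * (1 + (c⁻¹ * t) ^ 2) ^ (-s) = (c ^ 2 + t ^ 2) ^ (-s)
  rw [← Real.mul_rpow (by positivity) (by positivity)]
  congr 1
  field_simp

/-- Proposition 3.5 of the paper: the extension map `J`, `(Jφ)(y,t) = φ(y)`, is an isometry
(up to the constant `C_u`) from `L²(ℝ^{n-2}, |y|^{-(n-2)u'} dy)` into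
`L²(ℝ^{n-1}, |x|^{-(n-1)u} dx)`. -/
theorem extension_isometry (n : ℕ) (hn : 3 ≤ n) (u : ℝ)
    (hu1 : 1 / ((n : ℝ) - 1) < u) (hu2 : u < 1)
    (u' : ℝ) (hu' : u' = (((n : ℝ) - 1) * u - 1) / ((n : ℝ) - 2)) :
    Integrable (fun t : ℝ => (1 + t ^ 2) ^ (-(((n : ℝ) - 1) * u / 2))) ∧
    ∀ φ : EuclideanSpace ℝ (Fin (n - 2)) → ℂ, Measurable φ →
      ∫⁻ p : EuclideanSpace ℝ (Fin (n - 2)) × ℝ,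
          (‖φ p.1‖₊ : ℝ≥0∞) ^ 2 *
            ENNReal.ofReal ((‖p.1‖ ^ 2 + p.2 ^ 2) ^ (-(((n : ℝ) - 1) * u / 2)))
        = ENNReal.ofReal (∫ t : ℝ, (1 + t ^ 2) ^ (-(((n : ℝ) - 1) * u / 2))) *
            ∫⁻ y : EuclideanSpace ℝ (Fin (n - 2)),
              (‖φ y‖₊ : ℝ≥0∞) ^ 2 * ENNReal.ofReal (‖y‖ ^ (-(((n : ℝ) - 2) * u'))) := by
  have hn3 : (3:ℝ) ≤ (n:ℝ) := by exact_mod_cast hn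
  set s : ℝ := ((n : ℝ) - 1) * u / 2 with hs_def
  have hr : (1:ℝ) < ((n:ℝ) - 1) * u := by
    rw [div_lt_iff₀ (by linarith)] at hu1
    linarith [mul_comm u ((n:ℝ) - 1)]
  have hC : Integrable (fun t : ℝ => (1 + t ^ 2) ^ (-s)) := by
    have h := integrable_rpow_neg_one_add_norm_sq (E := ℝ) (μ := volume)
      (r := ((n:ℝ) - 1) * u) (by simpa using hr)
    simpa [Real.norm_eq_abs, sq_abs, neg_div, hs_def] using h
  refine ⟨hC, ?_⟩
  intro φ hφ
  haveI : Nonempty (Fin (n - 2)) := ⟨⟨0, by omega⟩⟩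
  haveI : Nontrivial (EuclideanSpace ℝ (Fin (n - 2))) := inferInstance
  have hexp : -(((n:ℝ) - 2) * u') = 1 - 2 * s := by
    rw [hu', hs_def]
    have h2 : ((n:ℝ) - 2) ≠ 0 := by linarith
    field_simp
    ring
  have hmeas : Measurable fun p : EuclideanSpace ℝ (Fin (n - 2)) × ℝ =>
      (‖φ p.1‖₊ : ℝ≥0∞) ^ 2 * ENNReal.ofReal ((‖p.1‖ ^ 2 + p.2 ^ 2) ^ (-s)) := by
    fun_prop
  rw [MeasureTheory.Measure.volume_eq_prod, lintegral_prod _ hmeas.aemeasurable]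
  have h0 : ∀ᵐ y : EuclideanSpace ℝ (Fin (n - 2)), y ≠ 0 := by
    rw [ae_iff]
    simpa using measure_singleton (0 : EuclideanSpace ℝ (Fin (n - 2)))
  have key : ∀ᵐ y : EuclideanSpace ℝ (Fin (n - 2)),
      (∫⁻ t : ℝ, (‖φ y‖₊ : ℝ≥0∞) ^ 2 * ENNReal.ofReal ((‖y‖ ^ 2 + t ^ 2) ^ (-s)))
      = ENNReal.ofReal (∫ t : ℝ, (1 + t ^ 2) ^ (-s)) *
          ((‖φ y‖₊ : ℝ≥0∞) ^ 2 * ENNReal.ofReal (‖y‖ ^ (-(((n:ℝ) - 2) * u')))) := by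
    filter_upwards [h0] with y hy
    have hc : 0 < ‖y‖ := norm_pos_iff.mpr hy
    rw [lintegral_const_mul _ (by fun_prop)]
    rw [← MeasureTheory.ofReal_integral_eq_lintegral_ofReal (aux_int s hC hc)
        (ae_of_all _ fun t => Real.rpow_nonneg (by positivity) _)]
    rw [aux_scale s hc, hexp, ENNReal.ofReal_mul (Real.rpow_nonneg hc.le _)]
    ring
  rw [lintegral_congr_ae key, lintegral_const_mul _ (by fun_prop)]
end

section
/- Let n ≥ 3, let 1/(n−1) < u < 1, and set u' = ((n−1)u − 1)/(n−2). Let g : ℝ^{n-2} → ℂ and f : ℝ^{n-2} × ℝ → ℂ be Schwartz functions, and for y ∈ ℝ^{n-2}, y ≠ 0, define h(y) = ∫_ℝ (1+s²)^{-(n-1)u/2} f(y, |y|·s) ds. Then all integrals below converge absolutely and ∫_{ℝ^{n-2} × ℝ} (|y|² + s²)^{-(n-1)u/2} conj(g(y)) f(y,s) dy ds = ∫_{ℝ^{n-2}} |y|^{-(n-2)u'} conj(g(y)) h(y) dy. -/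
open MeasureTheory
open scoped ComplexConjugate

open Metric Module
open scoped ENNReal


lemma integrableOn_norm_rpow_neg_ball
    {E : Type*} [NormedAddCommGroup E] [NormedSpace ℝ E] [MeasurableSpace E] [BorelSpace E]
    [FiniteDimensional ℝ E] (μ : Measure E) [μ.IsAddHaarMeasure] {β : ℝ}
    (hβ0 : 0 ≤ β) (hβ : β < finrank ℝ E) :
    IntegrableOn (fun y : E => ‖y‖ ^ (-β)) (ball (0 : E) 1) μ := by
  have hd : 0 < finrank ℝ E := by exact_mod_cast hβ0.trans_lt hβ
  haveI : Nontrivial E := nontrivial_of_finrank_pos hd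
  set d := finrank ℝ E with hdd
  set A : ℕ → Set E := fun k => ball 0 ((1/2 : ℝ) ^ k) \ ball 0 ((1/2 : ℝ) ^ (k+1)) with hA
  have cover : ball (0 : E) 1 ⊆ {0} ∪ ⋃ k, A k := by
    intro y hy
    rcases eq_or_ne y 0 with rfl | hy0
    · exact Set.mem_union_left _ rfl
    right
    have hy1 : ‖y‖ < 1 := by simpa using hy
    have hypos : 0 < ‖y‖ := norm_pos_iff.2 hy0
    have hex : ∃ k : ℕ, (1/2 : ℝ) ^ (k+1) ≤ ‖y‖ := by
      obtain ⟨m, hm⟩ := exists_pow_lt_of_lt_one hypos (by norm_num : (1/2 : ℝ) < 1)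
      exact ⟨m, le_of_lt (lt_of_le_of_lt (pow_le_pow_of_le_one (by norm_num) (by norm_num)
        (Nat.le_succ m)) hm)⟩
    classical
    set k := Nat.find hex with hk
    have hk1 : (1/2 : ℝ) ^ (k+1) ≤ ‖y‖ := Nat.find_spec hex
    have hk2 : ‖y‖ < (1/2 : ℝ) ^ k := by
      rcases Nat.eq_zero_or_pos k with hk0 | hk0
      · rw [hk0]; simpa using hy1
      · have := Nat.find_min hex (m := k - 1) (by omega)
        push_neg at this
        have : ‖y‖ < (1/2 : ℝ) ^ (k - 1 + 1) := this
        simpa [Nat.sub_add_cancel hk0] using this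
    exact Set.mem_iUnion.2 ⟨k, ⟨mem_ball_zero_iff.2 hk2,
      fun hmem => absurd hk1 (not_le.2 (mem_ball_zero_iff.1 hmem))⟩⟩
  refine ⟨(by fun_prop : Measurable fun y : E => ‖y‖ ^ (-β)).aestronglyMeasurable, ?_⟩
  rw [hasFiniteIntegral_iff_norm]
  have hnn : ∀ y : E, ‖(‖y‖ ^ (-β) : ℝ)‖ = ‖y‖ ^ (-β) := fun y =>
    Real.norm_of_nonneg (Real.rpow_nonneg (norm_nonneg y) _)
  simp_rw [hnn]
  set φ : E → ℝ≥0∞ := fun y => ENNReal.ofReal (‖y‖ ^ (-β)) with hφ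
  set c : ℝ := (2 : ℝ) ^ β with hc
  have hc0 : 0 ≤ c := Real.rpow_nonneg (by norm_num) _
  set B : ℝ≥0∞ := μ (ball 0 1) with hB
  have hBfin : B < ∞ := measure_ball_lt_top
  set q : ℝ := c * (1/2 : ℝ) ^ d with hq
  have hq0 : 0 ≤ q := by positivity
  have hq1 : q < 1 := by
    have h2d : c < (2 : ℝ) ^ d := by
      calc c = (2 : ℝ) ^ β := rfl
        _ < (2 : ℝ) ^ (d : ℝ) := Real.rpow_lt_rpow_of_exponent_lt one_lt_two hβ
        _ = (2 : ℝ) ^ d := by rw [Real.rpow_natCast]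
    have : q = c / 2 ^ d := by
      rw [hq, one_div, inv_pow, div_eq_mul_inv]
    rw [this, div_lt_one (by positivity)]
    exact h2d
  -- bound on each shell
  have hshell : ∀ k : ℕ, ∫⁻ y in A k, φ y ∂μ ≤ (ENNReal.ofReal c * B) * ENNReal.ofReal q ^ k := by
    intro k
    have hb1 : ∫⁻ y in A k, φ y ∂μ ≤ ∫⁻ _ in A k, ENNReal.ofReal (((1/2 : ℝ) ^ (k+1)) ^ (-β)) ∂μ := by
      refine setLIntegral_mono (by fun_prop) fun y hy => ?_
      have hyge : (1/2 : ℝ) ^ (k+1) ≤ ‖y‖ := by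
        have := hy.2
        simpa [mem_ball_zero_iff, not_lt] using this
      exact ENNReal.ofReal_le_ofReal
        (Real.rpow_le_rpow_of_nonpos (by positivity) hyge (neg_nonpos.2 hβ0))
    have hb2 : μ (A k) ≤ ENNReal.ofReal (((1/2 : ℝ) ^ k) ^ d) * B := by
      calc μ (A k) ≤ μ (ball 0 ((1/2 : ℝ) ^ k)) := measure_mono Set.diff_subset
        _ = ENNReal.ofReal (((1/2 : ℝ) ^ k) ^ d) * B := μ.addHaar_ball 0 (by positivity)
    calc ∫⁻ y in A k, φ y ∂μ
        ≤ ENNReal.ofReal (((1/2 : ℝ) ^ (k+1)) ^ (-β)) * μ (A k) := by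
          rw [← setLIntegral_const]; exact hb1
      _ ≤ ENNReal.ofReal (((1/2 : ℝ) ^ (k+1)) ^ (-β)) * (ENNReal.ofReal (((1/2 : ℝ) ^ k) ^ d) * B) := by
          gcongr
      _ = (ENNReal.ofReal c * B) * ENNReal.ofReal q ^ k := by
          have key : ((1/2 : ℝ) ^ (k+1)) ^ (-β) = c ^ (k + 1) := by
            rw [hc]
            rw [one_div, inv_pow, Real.inv_rpow (by positivity), ← Real.rpow_neg (by positivity),
              neg_neg, ← Real.rpow_natCast (2 : ℝ) (k+1), ← Real.rpow_mul (by norm_num),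
              mul_comm (((k+1 : ℕ) : ℝ)) β, Real.rpow_mul (by norm_num), Real.rpow_natCast]
          have key2 : ((1/2 : ℝ) ^ k) ^ d = ((1/2 : ℝ) ^ d) ^ k := by
            rw [← pow_mul, ← pow_mul, mul_comm]
          have hreal : c ^ (k+1) * ((1/2 : ℝ) ^ k) ^ d = c * q ^ k := by
            rw [hq, mul_pow, key2, pow_succ]; ring
          rw [key, ← mul_assoc, ← ENNReal.ofReal_mul (by positivity), hreal,
            ENNReal.ofReal_mul hc0, ENNReal.ofReal_pow hq0]
          ring
  calc ∫⁻ y in ball 0 1, φ y ∂μ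
      ≤ ∫⁻ y in {0} ∪ ⋃ k, A k, φ y ∂μ := lintegral_mono_set cover
    _ ≤ ∫⁻ y in {(0 : E)}, φ y ∂μ + ∫⁻ y in ⋃ k, A k, φ y ∂μ := lintegral_union_le _ _ _
    _ ≤ 0 + ∑' k, ∫⁻ y in A k, φ y ∂μ := by
        gcongr
        · exact le_of_eq (setLIntegral_measure_zero _ _ (measure_singleton 0))
        · exact lintegral_iUnion_le _ _
    _ ≤ 0 + ∑' k : ℕ, (ENNReal.ofReal c * B) * ENNReal.ofReal q ^ k := by
        gcongr with k; exact hshell k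
    _ < ∞ := by
        rw [zero_add, ENNReal.tsum_mul_left, ENNReal.tsum_geometric]
        refine ENNReal.mul_lt_top (ENNReal.mul_lt_top ENNReal.ofReal_lt_top hBfin) ?_
        rw [ENNReal.inv_lt_top]
        exact tsub_pos_iff_lt.2 (by simpa using ENNReal.ofReal_lt_one.2 hq1)

lemma schwartz_bound {E F : Type*} [NormedAddCommGroup E] [NormedSpace ℝ E]
    [NormedAddCommGroup F] [NormedSpace ℝ F] (g : SchwartzMap E F) :
    ∃ C, 0 < C ∧ ∀ x, ‖g x‖ ≤ C := by
  obtain ⟨C, hC0, hC⟩ := g.decay 0 0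
  exact ⟨C, hC0, fun x => by simpa [norm_iteratedFDeriv_zero] using hC x⟩


lemma schwartz_mul_rpow_integrable {m : ℕ} (g : SchwartzMap (EuclideanSpace ℝ (Fin m)) ℂ)
    {β : ℝ} (hβ0 : 0 ≤ β) (hβ : β < m) :
    Integrable (fun y : EuclideanSpace ℝ (Fin m) => ‖y‖ ^ (-β) * ‖g y‖) := by
  obtain ⟨C, hC0, hC⟩ := schwartz_bound g
  have hfin : (finrank ℝ (EuclideanSpace ℝ (Fin m)) : ℝ) = m := by
    rw [finrank_euclideanSpace_fin]
  have hmeas : AEStronglyMeasurable (fun y : EuclideanSpace ℝ (Fin m) => ‖y‖ ^ (-β) * ‖g y‖)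
      (volume : Measure (EuclideanSpace ℝ (Fin m))) :=
    ((by fun_prop : Measurable fun y : EuclideanSpace ℝ (Fin m) => ‖y‖ ^ (-β)).mul
      g.continuous.measurable.norm).aestronglyMeasurable
  rw [← integrableOn_univ, ← Set.union_compl_self (ball (0 : EuclideanSpace ℝ (Fin m)) 1)]
  refine IntegrableOn.union ?_ ?_
  · refine Integrable.mono' (((integrableOn_norm_rpow_neg_ball volume hβ0
      (by rw [finrank_euclideanSpace_fin]; exact_mod_cast hβ)).mul_const C)) hmeas.restrict ?_
    filter_upwards with y
    rw [Real.norm_of_nonneg (by positivity)]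
    exact mul_le_mul_of_nonneg_left (hC y) (Real.rpow_nonneg (norm_nonneg _) _)
  · refine Integrable.mono' (g.integrable.norm.restrict) hmeas.restrict ?_
    rw [ae_restrict_iff' measurableSet_ball.compl]
    filter_upwards with y hy
    have h1 : (1 : ℝ) ≤ ‖y‖ := by simpa [mem_ball_zero_iff, not_lt] using hy
    rw [Real.norm_of_nonneg (by positivity)]
    calc ‖y‖ ^ (-β) * ‖g y‖ ≤ 1 * ‖g y‖ := by
          exact mul_le_mul_of_nonneg_right
            (Real.rpow_le_one_of_one_le_of_nonpos h1 (neg_nonpos.2 hβ0)) (norm_nonneg _)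
      _ = ‖g y‖ := one_mul _

/-- The adjoint identity inside Proposition 3.7 of the paper: `⟨Jg, f⟩ = ⟨g, h⟩` in the
weighted `L²` spaces, where `h = J*f` is given by
`h(y) = ∫ (1+s²)^{-(n-1)u/2} f(y, |y|s) ds`. -/
theorem adjoint_of_extension (n : ℕ) (hn : 3 ≤ n) (u : ℝ)
    (hu1 : 1 / ((n : ℝ) - 1) < u) (hu2 : u < 1)
    (u' : ℝ) (hu' : u' = (((n : ℝ) - 1) * u - 1) / ((n : ℝ) - 2))
    (g : SchwartzMap (EuclideanSpace ℝ (Fin (n - 2))) ℂ)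
    (f : SchwartzMap (EuclideanSpace ℝ (Fin (n - 2)) × ℝ) ℂ)
    (h : EuclideanSpace ℝ (Fin (n - 2)) → ℂ)
    (hh : ∀ y : EuclideanSpace ℝ (Fin (n - 2)), y ≠ 0 →
      h y = ∫ s : ℝ, (((1 + s ^ 2) ^ (-(((n : ℝ) - 1) * u / 2)) : ℝ) : ℂ) * f (y, ‖y‖ * s)) :
    (∀ y : EuclideanSpace ℝ (Fin (n - 2)), y ≠ 0 →
      Integrable (fun s : ℝ =>
        (((1 + s ^ 2) ^ (-(((n : ℝ) - 1) * u / 2)) : ℝ) : ℂ) * f (y, ‖y‖ * s))) ∧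
    Integrable (fun p : EuclideanSpace ℝ (Fin (n - 2)) × ℝ =>
        (((‖p.1‖ ^ 2 + p.2 ^ 2) ^ (-(((n : ℝ) - 1) * u / 2)) : ℝ) : ℂ) *
          conj (g p.1) * f p) ∧
    Integrable (fun y : EuclideanSpace ℝ (Fin (n - 2)) =>
        ((‖y‖ ^ (-(((n : ℝ) - 2) * u')) : ℝ) : ℂ) * conj (g y) * h y) ∧
    ∫ p : EuclideanSpace ℝ (Fin (n - 2)) × ℝ,
        (((‖p.1‖ ^ 2 + p.2 ^ 2) ^ (-(((n : ℝ) - 1) * u / 2)) : ℝ) : ℂ) *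
          conj (g p.1) * f p
      = ∫ y : EuclideanSpace ℝ (Fin (n - 2)),
          ((‖y‖ ^ (-(((n : ℝ) - 2) * u')) : ℝ) : ℂ) * conj (g y) * h y := by
  have hn3 : (3 : ℝ) ≤ (n : ℝ) := by exact_mod_cast hn
  set ν : ℝ := ((n : ℝ) - 1) * u with hν
  have hν1 : 1 < ν := by
    rw [div_lt_iff₀ (by linarith : (0:ℝ) < (n:ℝ) - 1)] at hu1
    rw [hν]; nlinarith
  have hνlt : ν < (n : ℝ) - 1 := by rw [hν]; nlinarith
  have hcast : ((n - 2 : ℕ) : ℝ) = (n : ℝ) - 2 := by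
    have h2 : 2 ≤ n := by omega
    push_cast [Nat.cast_sub h2]; ring
  have hne2 : ((n : ℝ) - 2) ≠ 0 := by linarith
  have hu'2 : ((n : ℝ) - 2) * u' = ν - 1 := by
    rw [hu', ← mul_div_assoc, mul_comm, mul_div_assoc, div_self hne2, mul_one]
  have hβ0 : (0:ℝ) ≤ ν - 1 := by linarith
  have hβlt : ν - 1 < ((n - 2 : ℕ) : ℝ) := by rw [hcast]; linarith
  obtain ⟨Cf, hCf0, hCf⟩ := schwartz_bound f
  -- the basic 1D integrable weight
  have I1 : Integrable (fun s : ℝ => (1 + s ^ 2) ^ (-(ν / 2))) := by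
    have := integrable_rpow_neg_one_add_norm_sq (E := ℝ) (μ := volume) (r := ν)
      (by simpa [Module.finrank_self] using hν1)
    simpa [Real.norm_eq_abs, sq_abs, neg_div] using this
  have hc00 : (0:ℝ) ≤ ∫ t : ℝ, (1 + t ^ 2) ^ (-(ν / 2)) :=
    integral_nonneg fun t => Real.rpow_nonneg (by positivity) _
  set c0 : ℝ := ∫ t : ℝ, (1 + t ^ 2) ^ (-(ν / 2)) with hc0
  -- first conjunct
  have claim1 : ∀ y : EuclideanSpace ℝ (Fin (n - 2)), y ≠ 0 →
      Integrable (fun s : ℝ => (((1 + s ^ 2) ^ (-(ν / 2)) : ℝ) : ℂ) * f (y, ‖y‖ * s)) := by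
    intro y _
    have hcont : Continuous fun s : ℝ => (((1 + s ^ 2) ^ (-(ν / 2)) : ℝ) : ℂ) * f (y, ‖y‖ * s) := by
      refine Continuous.mul ?_ ?_
      · exact Complex.continuous_ofReal.comp
          ((continuous_const.add (continuous_pow 2)).rpow_const fun s => Or.inl (ne_of_gt (by positivity : (0:ℝ) < 1 + s ^ 2)))
      · exact f.continuous.comp (continuous_const.prodMk (continuous_const.mul continuous_id))
    refine Integrable.mono' (I1.mul_const Cf) hcont.aestronglyMeasurable ?_
    filter_upwards with s
    rw [norm_mul, Complex.norm_real,
      Real.norm_of_nonneg (Real.rpow_nonneg (by positivity) _)]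
    exact mul_le_mul_of_nonneg_left (hCf _) (Real.rpow_nonneg (by positivity) _)
  refine ⟨claim1, ?_⟩
  -- the product-space function
  set F : EuclideanSpace ℝ (Fin (n - 2)) × ℝ → ℂ := fun p =>
    (((‖p.1‖ ^ 2 + p.2 ^ 2) ^ (-(ν / 2)) : ℝ) : ℂ) * conj (g p.1) * f p with hFdef
  have hsplit : ∀ (y : EuclideanSpace ℝ (Fin (n - 2))) (t : ℝ),
      (‖y‖ ^ 2 + (‖y‖ * t) ^ 2) ^ (-(ν / 2)) = (‖y‖ ^ 2) ^ (-(ν / 2)) * (1 + t ^ 2) ^ (-(ν / 2)) := by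
    intro y t
    rw [show ‖y‖ ^ 2 + (‖y‖ * t) ^ 2 = ‖y‖ ^ 2 * (1 + t ^ 2) by ring,
      Real.mul_rpow (sq_nonneg _) (by positivity)]
  have hpow : ∀ r : ℝ, 0 < r → r * (r ^ 2) ^ (-(ν / 2)) = r ^ ((1 : ℝ) - ν) := by
    intro r hr
    rw [show (1 : ℝ) - ν = 1 + ((2 : ℕ) : ℝ) * (-(ν / 2)) by push_cast; ring,
      Real.rpow_add hr, Real.rpow_one, ← Real.rpow_natCast r 2, ← Real.rpow_mul hr.le]
  have hFy : ∀ y : EuclideanSpace ℝ (Fin (n - 2)), y ≠ 0 →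
      Integrable (fun s : ℝ => F (y, s)) := by
    intro y hy
    have hr : (0 : ℝ) < ‖y‖ := norm_pos_iff.2 hy
    have hcm : Integrable (fun t : ℝ => F (y, ‖y‖ * t)) := by
      have base := (claim1 y hy).const_mul
        ((((‖y‖ ^ 2) ^ (-(ν / 2)) : ℝ) : ℂ) * conj (g y))
      refine base.congr (Filter.Eventually.of_forall fun t => ?_)
      simp only [hFdef]
      rw [hsplit y t]
      push_cast
      ring
    exact (integrable_comp_mul_left_iff (fun s : ℝ => F (y, s)) (ne_of_gt hr)).mp hcm
  have I2 : ∀ y : EuclideanSpace ℝ (Fin (n - 2)), y ≠ 0 →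
      Integrable (fun s : ℝ => (‖y‖ ^ 2 + s ^ 2) ^ (-(ν / 2))) := by
    intro y hy
    have hr : (0 : ℝ) < ‖y‖ := norm_pos_iff.2 hy
    have hcm : Integrable (fun t : ℝ => (‖y‖ ^ 2 + (‖y‖ * t) ^ 2) ^ (-(ν / 2))) := by
      refine (I1.const_mul ((‖y‖ ^ 2) ^ (-(ν / 2)))).congr
        (Filter.Eventually.of_forall fun t => (hsplit y t).symm)
    exact (integrable_comp_mul_left_iff
      (fun s : ℝ => (‖y‖ ^ 2 + s ^ 2) ^ (-(ν / 2))) (ne_of_gt hr)).mp hcm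
  have J2 : ∀ y : EuclideanSpace ℝ (Fin (n - 2)), y ≠ 0 →
      ∫ s : ℝ, (‖y‖ ^ 2 + s ^ 2) ^ (-(ν / 2)) = ‖y‖ ^ ((1 : ℝ) - ν) * c0 := by
    intro y hy
    have hr : (0 : ℝ) < ‖y‖ := norm_pos_iff.2 hy
    have hc := MeasureTheory.Measure.integral_comp_mul_left
      (fun s : ℝ => (‖y‖ ^ 2 + s ^ 2) ^ (-(ν / 2))) ‖y‖
    rw [abs_inv, abs_of_pos hr] at hc
    have hl : ∫ x : ℝ, (‖y‖ ^ 2 + (‖y‖ * x) ^ 2) ^ (-(ν / 2))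
        = (‖y‖ ^ 2) ^ (-(ν / 2)) * c0 := by
      simp_rw [hsplit y]
      rw [integral_const_mul, hc0]
    rw [hl] at hc
    rw [smul_eq_mul] at hc
    have hint : ∫ s : ℝ, (‖y‖ ^ 2 + s ^ 2) ^ (-(ν / 2))
        = ‖y‖ * ((‖y‖ ^ 2) ^ (-(ν / 2)) * c0) := by
      rw [hc, ← mul_assoc, mul_inv_cancel₀ (ne_of_gt hr), one_mul]
    rw [hint, ← mul_assoc, hpow ‖y‖ hr]
  -- measurability of F on the product
  have hFmeas : AEStronglyMeasurable F
      ((volume : Measure (EuclideanSpace ℝ (Fin (n - 2)))).prod volume) := by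
    refine Measurable.aestronglyMeasurable ?_
    simp only [hFdef]
    have h1 : Measurable fun p : EuclideanSpace ℝ (Fin (n - 2)) × ℝ =>
        ((‖p.1‖ ^ 2 + p.2 ^ 2) ^ (-(ν / 2)) : ℝ) := by fun_prop
    exact ((Complex.measurable_ofReal.comp h1).mul
      ((Complex.continuous_conj.comp (g.continuous.comp continuous_fst)).measurable)).mul
      f.continuous.measurable
  haveI : Nontrivial (EuclideanSpace ℝ (Fin (n - 2))) :=
    nontrivial_of_finrank_pos (R := ℝ) (by rw [finrank_euclideanSpace_fin]; omega)
  have hae : ∀ᵐ y : EuclideanSpace ℝ (Fin (n - 2)), y ≠ 0 := by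
    rw [ae_iff]
    simp only [ne_eq, not_not, Set.setOf_eq_eq_singleton]
    exact measure_singleton _
  have hnormF : ∀ (y : EuclideanSpace ℝ (Fin (n - 2))) (s : ℝ),
      ‖F (y, s)‖ = (‖y‖ ^ 2 + s ^ 2) ^ (-(ν / 2)) * (‖g y‖ * ‖f (y, s)‖) := by
    intro y s
    simp only [hFdef, norm_mul, Complex.norm_real, RCLike.norm_conj]
    rw [Real.norm_of_nonneg (Real.rpow_nonneg (by positivity) _), mul_assoc]
  have hFint : Integrable F
      ((volume : Measure (EuclideanSpace ℝ (Fin (n - 2)))).prod volume) := by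
    refine (integrable_prod_iff hFmeas).mpr ⟨?_, ?_⟩
    · filter_upwards [hae] with y hy; exact hFy y hy
    · have hφ : Integrable (fun y : EuclideanSpace ℝ (Fin (n - 2)) =>
          (c0 * Cf) * (‖y‖ ^ (-(ν - 1)) * ‖g y‖)) :=
        (schwartz_mul_rpow_integrable g hβ0 hβlt).const_mul _
      refine Integrable.mono' hφ (hFmeas.norm.integral_prod_right') ?_
      filter_upwards [hae] with y hy
      have hr : (0 : ℝ) < ‖y‖ := norm_pos_iff.2 hy
      have step1 : ∫ s : ℝ, ‖F (y, s)‖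
          ≤ ∫ s : ℝ, (‖y‖ ^ 2 + s ^ 2) ^ (-(ν / 2)) * (‖g y‖ * Cf) := by
        refine integral_mono (hFy y hy).norm ((I2 y hy).mul_const _) fun s => ?_
        rw [hnormF y s]
        have h2 : ‖g y‖ * ‖f (y, s)‖ ≤ ‖g y‖ * Cf :=
          mul_le_mul_of_nonneg_left (hCf _) (norm_nonneg _)
        exact mul_le_mul_of_nonneg_left h2 (Real.rpow_nonneg (by positivity) _)
      have step2 : ∫ s : ℝ, (‖y‖ ^ 2 + s ^ 2) ^ (-(ν / 2)) * (‖g y‖ * Cf)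
          = (‖y‖ ^ ((1 : ℝ) - ν) * c0) * (‖g y‖ * Cf) := by
        rw [integral_mul_const, J2 y hy]
      rw [Real.norm_of_nonneg (integral_nonneg fun s => norm_nonneg _)]
      calc ∫ s : ℝ, ‖F (y, s)‖ ≤ _ := step1
        _ = _ := step2
        _ = (c0 * Cf) * (‖y‖ ^ (-(ν - 1)) * ‖g y‖) := by
            rw [show (1 : ℝ) - ν = -(ν - 1) by ring]; ring
  -- the key pointwise identity
  have hkey : ∀ y : EuclideanSpace ℝ (Fin (n - 2)), y ≠ 0 →
      ∫ s : ℝ, F (y, s)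
        = ((‖y‖ ^ (-(((n : ℝ) - 2) * u')) : ℝ) : ℂ) * conj (g y) * h y := by
    intro y hy
    have hr : (0 : ℝ) < ‖y‖ := norm_pos_iff.2 hy
    have hfun : ∀ x : ℝ, F (y, ‖y‖ * x)
        = ((((‖y‖ ^ 2) ^ (-(ν / 2)) : ℝ) : ℂ) * conj (g y))
            * ((((1 + x ^ 2) ^ (-(ν / 2)) : ℝ) : ℂ) * f (y, ‖y‖ * x)) := by
      intro x
      simp only [hFdef]
      rw [hsplit y x]
      push_cast
      ring
    have hlhs : ∫ x : ℝ, F (y, ‖y‖ * x)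
        = (((‖y‖ ^ 2) ^ (-(ν / 2)) : ℝ) : ℂ) * conj (g y) * h y := by
      simp_rw [hfun]
      rw [integral_const_mul, ← hh y hy, mul_assoc]
    have hc := MeasureTheory.Measure.integral_comp_mul_left (fun s : ℝ => F (y, s)) ‖y‖
    rw [abs_inv, abs_of_pos hr] at hc
    have hint : ∫ s : ℝ, F (y, s) = ‖y‖ • ∫ x : ℝ, F (y, ‖y‖ * x) := by
      rw [hc, smul_smul, mul_inv_cancel₀ (ne_of_gt hr), one_smul]
    have hsc : ‖y‖ * (‖y‖ ^ 2) ^ (-(ν / 2)) = ‖y‖ ^ (-(((n : ℝ) - 2) * u')) := by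
      rw [hpow ‖y‖ hr, hu'2, show (1 : ℝ) - ν = -(ν - 1) by ring]
    rw [hint, hlhs, Complex.real_smul, ← hsc]
    push_cast
    ring
  refine ⟨?_, ?_, ?_⟩
  · rw [MeasureTheory.Measure.volume_eq_prod]; exact hFint
  · exact (hFint.integral_prod_left).congr
      (by filter_upwards [hae] with y hy; exact hkey y hy)
  · rw [MeasureTheory.Measure.volume_eq_prod, integral_prod _ hFint]
    exact integral_congr_ae (by filter_upwards [hae] with y hy; exact hkey y hy)
end

section
/- Let n ≥ 3, let 1/(n−1) < u < 1, set u' = ((n−1)u − 1)/(n−2) and C_u = ∫_ℝ (1+t²)^{-(n-1)u/2} dt. Let f : ℝ^{n-2} × ℝ → ℂ be a Schwartz function and for y ≠ 0 define h(y) = ∫_ℝ (1+s²)^{-(n-1)u/2} f(y, |y|·s) ds. Then ∫_{ℝ^{n-2}} |y|^{-(n-2)u'} |h(y)|² dy ≤ C_u · ∫_{ℝ^{n-2} × ℝ} (|y|² + s²)^{-(n-1)u/2} |f(y,s)|² dy ds. -/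
set_option maxHeartbeats 1000000


open MeasureTheory
open scoped ENNReal

/-- Corollary 3.10 of the paper in the weighted-`L²` model: the restriction map
(the adjoint `J*` of the isometric extension `J`) is bounded, with norm controlled by
`C_u = ∫ (1+t²)^{-(n-1)u/2} dt`. -/
theorem restriction_continuous (n : ℕ) (hn : 3 ≤ n) (u : ℝ)
    (hu1 : 1 / ((n : ℝ) - 1) < u) (hu2 : u < 1)
    (u' : ℝ) (hu' : u' = (((n : ℝ) - 1) * u - 1) / ((n : ℝ) - 2))
    (f : SchwartzMap (EuclideanSpace ℝ (Fin (n - 2)) × ℝ) ℂ)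
    (h : EuclideanSpace ℝ (Fin (n - 2)) → ℂ)
    (hh : ∀ y : EuclideanSpace ℝ (Fin (n - 2)), y ≠ 0 →
      h y = ∫ s : ℝ, (((1 + s ^ 2) ^ (-(((n : ℝ) - 1) * u / 2)) : ℝ) : ℂ) * f (y, ‖y‖ * s)) :
    ∫⁻ y : EuclideanSpace ℝ (Fin (n - 2)),
        ENNReal.ofReal (‖y‖ ^ (-(((n : ℝ) - 2) * u'))) * (‖h y‖₊ : ℝ≥0∞) ^ 2
      ≤ ENNReal.ofReal (∫ t : ℝ, (1 + t ^ 2) ^ (-(((n : ℝ) - 1) * u / 2))) *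
          ∫⁻ p : EuclideanSpace ℝ (Fin (n - 2)) × ℝ,
            ENNReal.ofReal ((‖p.1‖ ^ 2 + p.2 ^ 2) ^ (-(((n : ℝ) - 1) * u / 2))) *
              (‖f p‖₊ : ℝ≥0∞) ^ 2 := by
  set α : ℝ := ((n : ℝ) - 1) * u / 2 with hαdef
  have hn3 : (3 : ℝ) ≤ (n : ℝ) := by exact_mod_cast hn
  have hnu : 1 < ((n : ℝ) - 1) * u := by
    have h1 : (0 : ℝ) < (n : ℝ) - 1 := by linarith
    calc (1 : ℝ) = ((n : ℝ) - 1) * (1 / ((n : ℝ) - 1)) := by field_simp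
      _ < ((n : ℝ) - 1) * u := by
          exact mul_lt_mul_of_pos_left hu1 h1
  have h2α : 2 * α = ((n : ℝ) - 1) * u := by rw [hαdef]; ring
  -- integrability of the weight
  have hInt : Integrable (fun t : ℝ => (1 + t ^ 2) ^ (-α)) := by
    have hfr : ((Module.finrank ℝ ℝ : ℝ)) < ((n : ℝ) - 1) * u := by
      simpa using hnu
    have := integrable_rpow_neg_one_add_norm_sq (E := ℝ) (μ := volume)
      (r := ((n : ℝ) - 1) * u) hfr
    simpa [Real.norm_eq_abs, sq_abs, neg_div, hαdef, mul_div_assoc] using this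
  have hwpos : ∀ s : ℝ, 0 < (1 + s ^ 2) ^ (-α) := fun s =>
    Real.rpow_pos_of_pos (by positivity) _
  set B : ℝ≥0∞ := ENNReal.ofReal (∫ t : ℝ, (1 + t ^ 2) ^ (-α)) with hBdef
  have hB : B = ∫⁻ s : ℝ, ENNReal.ofReal ((1 + s ^ 2) ^ (-α)) :=
    MeasureTheory.ofReal_integral_eq_lintegral_ofReal hInt
      (Filter.Eventually.of_forall fun s => (hwpos s).le)
  have hfc : Continuous f := f.continuous
  -- the key pointwise estimate
  have key : ∀ y : EuclideanSpace ℝ (Fin (n - 2)), y ≠ 0 →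
      ENNReal.ofReal (‖y‖ ^ (-(((n : ℝ) - 2) * u'))) * (‖h y‖₊ : ℝ≥0∞) ^ 2
        ≤ B * ∫⁻ t : ℝ,
            ENNReal.ofReal ((‖y‖ ^ 2 + t ^ 2) ^ (-α)) * (‖f (y, t)‖₊ : ℝ≥0∞) ^ 2 := by
    intro y hy
    set c : ℝ := ‖y‖ with hc
    have hc0 : 0 < c := norm_pos_iff.mpr hy
    set W : ℝ → ℝ≥0∞ := fun s => ENNReal.ofReal ((1 + s ^ 2) ^ (-α)) with hW
    set Fy : ℝ → ℝ≥0∞ := fun s => (‖f (y, c * s)‖₊ : ℝ≥0∞) with hFy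
    have hWm : Measurable W := by fun_prop
    have hFym : Measurable Fy := by
      have : Continuous fun s : ℝ => f (y, c * s) :=
        hfc.comp (by continuity)
      fun_prop
    -- Step 1 : triangle inequality
    have h1 : (‖h y‖₊ : ℝ≥0∞) ≤ ∫⁻ s : ℝ, W s * Fy s := by
      rw [hh y hy]
      refine (enorm_integral_le_lintegral_enorm _).trans_eq ?_
      refine lintegral_congr fun s => ?_
      show _ = ENNReal.ofReal ((1 + s ^ 2) ^ (-α)) * (‖f (y, c * s)‖₊ : ℝ≥0∞)
      rw [enorm_eq_nnnorm, nnnorm_mul, ENNReal.coe_mul, Complex.nnnorm_real, ← enorm_eq_nnnorm,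
        Real.enorm_eq_ofReal (hwpos s).le, hc]
    -- Step 2 : Cauchy-Schwarz (Hölder with p = q = 2)
    have holder := ENNReal.lintegral_mul_le_Lp_mul_Lq volume
      (p := 2) (q := 2) ⟨by norm_num, by norm_num, by norm_num⟩
      (f := fun s => W s ^ (1 / 2 : ℝ))
      (g := fun s => W s ^ (1 / 2 : ℝ) * Fy s)
      ((hWm.pow_const _).aemeasurable) (((hWm.pow_const _).mul hFym).aemeasurable)
    have hWsplit : ∀ s : ℝ, W s ^ (1 / 2 : ℝ) * (W s ^ (1 / 2 : ℝ) * Fy s) = W s * Fy s := by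
      intro s
      rw [← mul_assoc, ← ENNReal.rpow_add_of_nonneg _ _ (by norm_num) (by norm_num)]
      norm_num
    have hW2 : ∀ s : ℝ, (W s ^ (1 / 2 : ℝ)) ^ (2 : ℝ) = W s := by
      intro s
      rw [← ENNReal.rpow_mul]
      norm_num
    have hW2' : ∀ s : ℝ, (W s ^ (1 / 2 : ℝ) * Fy s) ^ (2 : ℝ) = W s * Fy s ^ 2 := by
      intro s
      rw [ENNReal.mul_rpow_of_nonneg _ _ (by norm_num : (0:ℝ) ≤ 2), hW2 s,
        ← ENNReal.rpow_natCast (Fy s) 2]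
      norm_num
    have h2 : ∫⁻ s : ℝ, W s * Fy s ≤
        (∫⁻ s : ℝ, W s) ^ (1 / 2 : ℝ) * (∫⁻ s : ℝ, W s * Fy s ^ 2) ^ (1 / 2 : ℝ) := by
      calc ∫⁻ s : ℝ, W s * Fy s
          = ∫⁻ s : ℝ, (fun s => W s ^ (1 / 2 : ℝ)) s * (fun s => W s ^ (1 / 2 : ℝ) * Fy s) s := by
            exact (lintegral_congr fun s => (hWsplit s).symm)
        _ ≤ (∫⁻ s : ℝ, (W s ^ (1 / 2 : ℝ)) ^ (2:ℝ)) ^ (1 / 2 : ℝ) *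
            (∫⁻ s : ℝ, (W s ^ (1 / 2 : ℝ) * Fy s) ^ (2:ℝ)) ^ (1 / 2 : ℝ) := holder
        _ = (∫⁻ s : ℝ, W s) ^ (1 / 2 : ℝ) * (∫⁻ s : ℝ, W s * Fy s ^ 2) ^ (1 / 2 : ℝ) := by
            rw [lintegral_congr hW2, lintegral_congr hW2']
    have h3 : (‖h y‖₊ : ℝ≥0∞) ^ 2 ≤ B * ∫⁻ s : ℝ, W s * Fy s ^ 2 := by
      calc (‖h y‖₊ : ℝ≥0∞) ^ 2 ≤ (∫⁻ s : ℝ, W s * Fy s) ^ 2 := by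
            simpa [pow_two] using mul_le_mul' h1 h1
        _ ≤ ((∫⁻ s : ℝ, W s) ^ (1 / 2 : ℝ) * (∫⁻ s : ℝ, W s * Fy s ^ 2) ^ (1 / 2 : ℝ)) ^ 2 := by
            simpa [pow_two] using mul_le_mul' h2 h2
        _ = B * ∫⁻ s : ℝ, W s * Fy s ^ 2 := by
            rw [mul_pow, ← ENNReal.rpow_natCast ((∫⁻ s : ℝ, W s) ^ (1 / 2 : ℝ)) 2,
              ← ENNReal.rpow_natCast ((∫⁻ s : ℝ, W s * Fy s ^ 2) ^ (1 / 2 : ℝ)) 2,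
              ← ENNReal.rpow_mul, ← ENNReal.rpow_mul, hB]
            norm_num
    -- Step 3 : scaling
    set G : ℝ → ℝ≥0∞ := fun t =>
      ENNReal.ofReal ((c ^ 2 + t ^ 2) ^ (-α)) * (‖f (y, t)‖₊ : ℝ≥0∞) ^ 2 with hG
    have hGm : Measurable G := by
      have : Continuous fun t : ℝ => f (y, t) := hfc.comp (by continuity)
      fun_prop
    have subst : ∫⁻ s : ℝ, G (c * s) = ENNReal.ofReal c⁻¹ * ∫⁻ t : ℝ, G t := by
      rw [← lintegral_map hGm (measurable_const_mul c), Real.map_volume_mul_left hc0.ne',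
        lintegral_smul_measure, abs_inv, abs_of_pos hc0, smul_eq_mul]
    have hpt : ∀ s : ℝ, W s * Fy s ^ 2 = ENNReal.ofReal (c ^ (2 * α)) * G (c * s) := by
      intro s
      have hsplit : (c ^ 2 + (c * s) ^ 2) ^ (-α)
          = c ^ (-(2 * α)) * (1 + s ^ 2) ^ (-α) := by
        have h1 : c ^ 2 + (c * s) ^ 2 = c ^ 2 * (1 + s ^ 2) := by ring
        rw [h1, Real.mul_rpow (by positivity) (by positivity),
          ← Real.rpow_natCast c 2, ← Real.rpow_mul hc0.le]
        norm_num
      rw [hG]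
      simp only
      rw [hsplit, ENNReal.ofReal_mul (by positivity), ← mul_assoc, ← mul_assoc,
        ← ENNReal.ofReal_mul (by positivity), ← Real.rpow_add hc0]
      norm_num
      rfl
    have h4 : ∫⁻ s : ℝ, W s * Fy s ^ 2
        = ENNReal.ofReal (c ^ (2 * α - 1)) * ∫⁻ t : ℝ, G t := by
      rw [lintegral_congr hpt, lintegral_const_mul' _ _ ENNReal.ofReal_ne_top, subst,
        ← mul_assoc, ← ENNReal.ofReal_mul (by positivity)]
      congr 2
      rw [← Real.rpow_neg_one c, ← Real.rpow_add hc0]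
      ring_nf
    -- Step 4 : combine, using the exponent identity
    have hexp : -(((n : ℝ) - 2) * u') + (2 * α - 1) = 0 := by
      have h2 : ((n : ℝ) - 2) ≠ 0 := by linarith
      rw [hu', h2α]
      field_simp
      ring
    calc ENNReal.ofReal (c ^ (-(((n : ℝ) - 2) * u'))) * (‖h y‖₊ : ℝ≥0∞) ^ 2
        ≤ ENNReal.ofReal (c ^ (-(((n : ℝ) - 2) * u'))) *
            (B * ∫⁻ s : ℝ, W s * Fy s ^ 2) := by
          exact mul_le_mul_right h3 _
      _ = (ENNReal.ofReal (c ^ (-(((n : ℝ) - 2) * u'))) * ENNReal.ofReal (c ^ (2 * α - 1))) *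
            (B * ∫⁻ t : ℝ, G t) := by
          rw [h4]; ring
      _ = B * ∫⁻ t : ℝ, G t := by
          rw [← ENNReal.ofReal_mul (by positivity), ← Real.rpow_add hc0, hexp,
            Real.rpow_zero, ENNReal.ofReal_one, one_mul]
  -- a.e. statement : y ≠ 0 almost everywhere
  haveI : Nonempty (Fin (n - 2)) := ⟨⟨0, by omega⟩⟩
  haveI : Nontrivial (EuclideanSpace ℝ (Fin (n - 2))) := inferInstance
  have hae : ∀ᵐ y : EuclideanSpace ℝ (Fin (n - 2)), y ≠ 0 := by
    rw [ae_iff]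
    simpa using measure_singleton (0 : EuclideanSpace ℝ (Fin (n - 2)))
  -- integrate the pointwise bound and apply Tonelli
  have hmain : ∫⁻ y : EuclideanSpace ℝ (Fin (n - 2)), ENNReal.ofReal (‖y‖ ^ (-(((n : ℝ) - 2) * u'))) * (‖h y‖₊ : ℝ≥0∞) ^ 2
      ≤ ∫⁻ y : EuclideanSpace ℝ (Fin (n - 2)), B * ∫⁻ t : ℝ,
          ENNReal.ofReal ((‖y‖ ^ 2 + t ^ 2) ^ (-α)) * (‖f (y, t)‖₊ : ℝ≥0∞) ^ 2 :=
    lintegral_mono_ae (hae.mono fun y hy => key y hy)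
  have hmeas : AEMeasurable
      (fun p : EuclideanSpace ℝ (Fin (n - 2)) × ℝ =>
        ENNReal.ofReal ((‖p.1‖ ^ 2 + p.2 ^ 2) ^ (-α)) * (‖f p‖₊ : ℝ≥0∞) ^ 2)
      ((volume : Measure (EuclideanSpace ℝ (Fin (n - 2)))).prod (volume : Measure ℝ)) := by
    apply Measurable.aemeasurable
    fun_prop
  have hton : ∫⁻ p : EuclideanSpace ℝ (Fin (n - 2)) × ℝ,
      ENNReal.ofReal ((‖p.1‖ ^ 2 + p.2 ^ 2) ^ (-α)) * (‖f p‖₊ : ℝ≥0∞) ^ 2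
      = ∫⁻ y : EuclideanSpace ℝ (Fin (n - 2)), ∫⁻ t : ℝ,
          ENNReal.ofReal ((‖y‖ ^ 2 + t ^ 2) ^ (-α)) * (‖f (y, t)‖₊ : ℝ≥0∞) ^ 2 := by
    rw [MeasureTheory.Measure.volume_eq_prod, MeasureTheory.lintegral_prod _ hmeas]
  refine hmain.trans ?_
  rw [lintegral_const_mul' _ _ ENNReal.ofReal_ne_top, hton]
end

section
/- Let d ≥ 1 and i ≥ 0 be integers, let λ > 1 be real, let P : ℝ^d × ℝ → ℝ be a homogeneous polynomial function of degree 2i in the d+1 coordinates, and let x ∈ ℝ^d with x ≠ 0. Set F(t) = P(x,t) · (|x|² + t²)^{-λ/2 - i} for t ∈ ℝ. Then F is Lebesgue integrable on ℝ, its Fourier transform 𝓕F(s) = ∫_ℝ F(t) e^{-2πist} dt is Lebesgue integrable on ℝ, and ∫_ℝ 𝓕F(s) ds = P(x,0) · |x|^{-λ - 2i}. -/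
open MeasureTheory Real

open scoped FourierTransform

section AuxLemmas

open Polynomial

/-- The sequence of polynomials arising from repeated differentiation of
`t ↦ q.eval t * (c + t ^ 2) ^ (β - k)`. -/
noncomputable def qseq (c β : ℝ) (p : Polynomial ℝ) : ℕ → Polynomial ℝ
  | 0 => p
  | (k+1) => derivative (qseq c β p k) * (X ^ 2 + C c) + C (2 * (β - k)) * X * qseq c β p k

lemma qseq_natDegree (c β : ℝ) (p : Polynomial ℝ) (k : ℕ) :
    (qseq c β p k).natDegree ≤ p.natDegree + k := by
  induction k with
  | zero => simp [qseq]
  | succ k ih =>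
    rw [qseq]
    apply (Polynomial.natDegree_add_le _ _).trans
    apply max_le
    · rcases Nat.eq_zero_or_pos (qseq c β p k).natDegree with h | h
      · rw [Polynomial.derivative_of_natDegree_zero h]
        simp
      · apply (Polynomial.natDegree_mul_le).trans
        have h1 : (derivative (qseq c β p k)).natDegree ≤ (qseq c β p k).natDegree - 1 :=
          Polynomial.natDegree_derivative_le _
        have h2 : (X ^ 2 + C c : Polynomial ℝ).natDegree ≤ 2 := by
          apply (Polynomial.natDegree_add_le _ _).trans
          simp [Polynomial.natDegree_X_pow]
        omega
    · apply (Polynomial.natDegree_mul_le).trans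
      have h4 : (C (2 * (β - (k:ℝ))) * X : Polynomial ℝ).natDegree ≤ 1 := by
        apply (Polynomial.natDegree_mul_le).trans
        rw [Polynomial.natDegree_C, Polynomial.natDegree_X]
      omega

lemma qseq_hasDerivAt (c : ℝ) (hc : 0 < c) (β : ℝ) (p : Polynomial ℝ) (k : ℕ) (t : ℝ) :
    HasDerivAt (fun t : ℝ => (qseq c β p k).eval t * (c + t ^ 2) ^ (β - k))
      ((qseq c β p (k + 1)).eval t * (c + t ^ 2) ^ (β - (k + 1 : ℕ))) t := by
  have hpos : (0:ℝ) < c + t ^ 2 := by positivity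
  have h1 : HasDerivAt (fun t : ℝ => c + t ^ 2) (2 * t) t := by
    simpa using ((hasDerivAt_pow 2 t).const_add c)
  have h2 : HasDerivAt (fun t : ℝ => (c + t ^ 2) ^ (β - k))
      (2 * t * (β - k) * (c + t ^ 2) ^ (β - k - 1)) t :=
    h1.rpow_const (Or.inl hpos.ne')
  have h3 := ((qseq c β p k).hasDerivAt t).mul h2
  convert h3 using 1
  · rfl
  · rfl
  · rfl
  have hsplit : (c + t ^ 2) ^ (β - k) = (c + t ^ 2) * (c + t ^ 2) ^ (β - k - 1) := by
    rw [show β - k = 1 + (β - k - 1) by ring, Real.rpow_add hpos, Real.rpow_one]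
    ring_nf
  rw [qseq]
  push_cast
  simp only [Polynomial.eval_add, Polynomial.eval_mul, Polynomial.eval_pow, Polynomial.eval_X,
    Polynomial.eval_C, hsplit]
  ring

lemma poly_bound (q : Polynomial ℝ) {c : ℝ} (hc : 0 < c) {n : ℝ} (hn : (q.natDegree : ℝ) ≤ n) :
    ∃ C : ℝ, 0 ≤ C ∧ ∀ t : ℝ, |q.eval t| ≤ C * (c + t ^ 2) ^ (n / 2) := by
  refine ⟨∑ j ∈ Finset.range (q.natDegree + 1), |q.coeff j| * c ^ (((j : ℝ) - n) / 2),
    Finset.sum_nonneg fun j _ => by positivity, fun t => ?_⟩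
  have hpos : (0:ℝ) < c + t ^ 2 := by positivity
  rw [Polynomial.eval_eq_sum_range, Finset.sum_mul]
  refine (Finset.abs_sum_le_sum_abs _ _).trans (Finset.sum_le_sum fun j hj => ?_)
  rw [Finset.mem_range] at hj
  have hjn : (j : ℝ) ≤ n := le_trans (by exact_mod_cast Nat.lt_succ_iff.mp hj) hn
  have h1 : |q.coeff j * t ^ j| = |q.coeff j| * |t| ^ j := by
    rw [abs_mul, abs_pow]
  have h2 : |t| ^ j ≤ (c + t ^ 2) ^ ((j : ℝ) / 2) := by
    have : |t| ^ j = (t ^ 2) ^ ((j : ℝ) / 2) := by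
      rw [← Real.rpow_natCast |t| j, ← sq_abs t, ← Real.rpow_natCast |t| 2,
        ← Real.rpow_mul (abs_nonneg t)]
      push_cast
      rw [show (2:ℝ) * (↑j / 2) = (j:ℝ) by ring, Real.rpow_natCast]
    rw [this]
    exact Real.rpow_le_rpow (sq_nonneg t) (by linarith) (by positivity)
  have h3 : (c + t ^ 2) ^ ((j : ℝ) / 2) ≤ c ^ (((j:ℝ) - n) / 2) * (c + t ^ 2) ^ (n / 2) := by
    rw [show (j : ℝ) / 2 = ((j:ℝ) - n) / 2 + n / 2 by ring, Real.rpow_add hpos]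
    exact mul_le_mul_of_nonneg_right
      (Real.rpow_le_rpow_of_nonpos hc (by nlinarith [sq_nonneg t]) (by linarith))
      (Real.rpow_nonneg hpos.le _)
  calc |q.coeff j * t ^ j| = |q.coeff j| * |t| ^ j := h1
    _ ≤ |q.coeff j| * (c ^ (((j:ℝ) - n) / 2) * (c + t ^ 2) ^ (n / 2)) :=
        mul_le_mul_of_nonneg_left (h2.trans h3) (abs_nonneg _)
    _ = |q.coeff j| * c ^ (((j:ℝ) - n) / 2) * (c + t ^ 2) ^ (n / 2) := by ring

lemma integrable_weight {c r : ℝ} (hc : 0 < c) (hr : 1 < r) :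
    Integrable (fun t : ℝ => (c + t ^ 2) ^ (-r / 2)) := by
  have hbase : Integrable (fun t : ℝ => ((1:ℝ) + ‖t‖ ^ 2) ^ (-r / 2)) :=
    integrable_rpow_neg_one_add_norm_sq (E := ℝ) (by simpa using hr)
  set m : ℝ := min c 1 with hm
  have hm0 : 0 < m := lt_min hc one_pos
  refine ((hbase.const_mul (m ^ (-r / 2))).mono' ?_ (ae_of_all _ fun t => ?_))
  · apply Continuous.aestronglyMeasurable
    apply Continuous.rpow_const (by continuity)
    intro t; exact Or.inl (by positivity)
  · have hpos : (0:ℝ) < c + t ^ 2 := by positivity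
    have h1 : m * (1 + t ^ 2) ≤ c + t ^ 2 := by
      have : m ≤ c := min_le_left _ _
      have h2 : m ≤ 1 := min_le_right _ _
      nlinarith [sq_nonneg t]
    rw [Real.norm_eq_abs, abs_of_nonneg (Real.rpow_nonneg hpos.le _)]
    calc (c + t ^ 2) ^ (-r / 2) ≤ (m * (1 + t ^ 2)) ^ (-r / 2) :=
          Real.rpow_le_rpow_of_nonpos (by positivity) h1 (by linarith)
      _ = m ^ (-r / 2) * ((1:ℝ) + ‖t‖ ^ 2) ^ (-r / 2) := by
          rw [Real.mul_rpow hm0.le (by positivity)]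
          norm_num

lemma integrable_poly_mul_rpow {c : ℝ} (hc : 0 < c) (q : Polynomial ℝ) {γ r : ℝ} (hr : 1 < r)
    (hγ : (q.natDegree : ℝ) / 2 + γ ≤ -r / 2) :
    Integrable (fun t : ℝ => q.eval t * (c + t ^ 2) ^ γ) := by
  obtain ⟨C, hC0, hC⟩ := poly_bound q hc (le_refl (q.natDegree : ℝ))
  refine ((integrable_weight hc hr).const_mul
      (C * c ^ ((q.natDegree : ℝ) / 2 + γ + r / 2))).mono' ?_
      (ae_of_all _ fun t => ?_)
  · apply Continuous.aestronglyMeasurable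
    exact (Polynomial.continuous q).mul
      (Continuous.rpow_const (by continuity) (fun t => Or.inl (by positivity)))
  · have hpos : (0:ℝ) < c + t ^ 2 := by positivity
    rw [Real.norm_eq_abs, abs_mul, abs_of_nonneg (Real.rpow_nonneg hpos.le _)]
    calc |q.eval t| * (c + t ^ 2) ^ γ
        ≤ (C * (c + t ^ 2) ^ ((q.natDegree : ℝ) / 2)) * (c + t ^ 2) ^ γ := by
          gcongr; exact hC t
      _ = C * (c + t ^ 2) ^ ((q.natDegree : ℝ) / 2 + γ + r / 2) * (c + t ^ 2) ^ (-r / 2) := by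
          rw [mul_assoc, mul_assoc, ← Real.rpow_add hpos, ← Real.rpow_add hpos]
          congr 2
          ring
      _ ≤ C * c ^ ((q.natDegree : ℝ) / 2 + γ + r / 2) * (c + t ^ 2) ^ (-r / 2) := by
          refine mul_le_mul_of_nonneg_right
            (mul_le_mul_of_nonneg_left ?_ hC0) (Real.rpow_nonneg hpos.le _)
          exact Real.rpow_le_rpow_of_nonpos hc (by nlinarith [sq_nonneg t]) (by linarith)

end AuxLemmas

/-- The scalar (matrix-entry) form of the central computation in the proof of Lemma 4.5 of
the paper: for a homogeneous polynomial `P` of degree `2i` in `d+1` variables and `λ > 1`,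
Fourier inversion at `t = 0` holds for `F(t) = P(x,t)·(|x|²+t²)^{-λ/2-i}`. -/
theorem fourier_inversion_scalar_kernel (d i : ℕ) (hd : 1 ≤ d)
    (lam : ℝ) (hlam : 1 < lam)
    (P : EuclideanSpace ℝ (Fin d) × ℝ → ℝ)
    (hP : ∃ Q : MvPolynomial (Fin (d + 1)) ℝ, Q.IsHomogeneous (2 * i) ∧
      ∀ (x : EuclideanSpace ℝ (Fin d)) (t : ℝ),
        P (x, t) = MvPolynomial.eval (Fin.snoc (fun k => x k) t : Fin (d + 1) → ℝ) Q)
    (x : EuclideanSpace ℝ (Fin d)) (hx : x ≠ 0) :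
    Integrable (fun t : ℝ => P (x, t) * (‖x‖ ^ 2 + t ^ 2) ^ (-(lam / 2) - (i : ℝ))) ∧
    Integrable (fun s : ℝ => ∫ t : ℝ,
        ((P (x, t) * (‖x‖ ^ 2 + t ^ 2) ^ (-(lam / 2) - (i : ℝ)) : ℝ) : ℂ) *
          Complex.exp ((-(2 * π * s * t) : ℝ) * Complex.I)) ∧
    ∫ s : ℝ, (∫ t : ℝ,
        ((P (x, t) * (‖x‖ ^ 2 + t ^ 2) ^ (-(lam / 2) - (i : ℝ)) : ℝ) : ℂ) *
          Complex.exp ((-(2 * π * s * t) : ℝ) * Complex.I))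
      = ((P (x, 0) * ‖x‖ ^ (-lam - 2 * (i : ℝ)) : ℝ) : ℂ) := by
  obtain ⟨Q, hQ, hPQ⟩ := hP
  -- reduce `P (x, ·)` to a one-variable polynomial of degree at most `2 i`
  obtain ⟨p, hpdeg, hpe⟩ : ∃ p : Polynomial ℝ, p.natDegree ≤ 2 * i ∧
      ∀ t : ℝ, p.eval t = P (x, t) := by
    set g : Fin (d + 1) → Polynomial ℝ :=
      Fin.snoc (fun j : Fin d => Polynomial.C (x j)) Polynomial.X with hg
    have hgdeg : ∀ k, (g k).natDegree ≤ if k = Fin.last d then 1 else 0 := by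
      intro k
      refine Fin.lastCases ?_ (fun j => ?_) k
      · simp [hg, Fin.snoc_last]
      · have : Fin.castSucc j ≠ Fin.last d := (Fin.castSucc_lt_last j).ne
        simp [hg, Fin.snoc_castSucc, this]
    refine ⟨MvPolynomial.aeval g Q, ?_, ?_⟩
    · rw [MvPolynomial.aeval_def, MvPolynomial.eval₂_eq]
      apply Polynomial.natDegree_sum_le_of_forall_le
      intro m hm
      have hdeg : Finsupp.degree m = 2 * i := by
        rw [Finsupp.degree_eq_weight_one]
        exact hQ (MvPolynomial.mem_support_iff.mp hm)
      calc (algebraMap ℝ (Polynomial ℝ) (MvPolynomial.coeff m Q)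
            * ∏ k ∈ m.support, g k ^ m k).natDegree
          ≤ (∏ k ∈ m.support, g k ^ m k).natDegree := by
            simpa using Polynomial.natDegree_C_mul_le (MvPolynomial.coeff m Q) _
        _ ≤ ∑ k ∈ m.support, (g k ^ m k).natDegree := Polynomial.natDegree_prod_le _ _
        _ ≤ ∑ k ∈ m.support, m k * (g k).natDegree :=
            Finset.sum_le_sum fun k _ => Polynomial.natDegree_pow_le
        _ ≤ ∑ k ∈ m.support, (if k = Fin.last d then m k else 0) := by
            refine Finset.sum_le_sum fun k _ => ?_
            by_cases h : k = Fin.last d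
            · rw [if_pos h]
              have h1 : (g k).natDegree ≤ 1 := by simpa [h] using hgdeg k
              calc m k * (g k).natDegree ≤ m k * 1 := Nat.mul_le_mul_left _ h1
                _ = m k := mul_one _
            · rw [if_neg h]
              have h1 : (g k).natDegree = 0 := Nat.le_zero.mp (by simpa [h] using hgdeg k)
              simp [h1]
        _ ≤ m (Fin.last d) := by
            rw [Finset.sum_ite_eq' m.support]
            split <;> simp
        _ ≤ Finsupp.degree m := Finsupp.le_degree _ m
        _ = 2 * i := hdeg
    · intro t
      rw [hPQ x t]
      have hcomp : (Polynomial.aeval t : Polynomial ℝ →ₐ[ℝ] ℝ).comp (MvPolynomial.aeval g)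
          = MvPolynomial.aeval (fun k => Polynomial.eval t (g k)) := by
        apply MvPolynomial.algHom_ext
        intro k
        simp
      have h1 : Polynomial.eval t (MvPolynomial.aeval g Q)
          = MvPolynomial.aeval (fun k => Polynomial.eval t (g k)) Q := by
        rw [← hcomp]
        simp
      rw [h1]
      have h2 : (fun k => Polynomial.eval t (g k))
          = (Fin.snoc (fun k => x k) t : Fin (d + 1) → ℝ) := by
        funext k
        refine Fin.lastCases ?_ (fun j => ?_) k <;> simp [hg, Fin.snoc_last, Fin.snoc_castSucc]
      rw [h2, ← MvPolynomial.coe_aeval_eq_eval]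
      rfl
  set c : ℝ := ‖x‖ ^ 2 with hc_def
  have hc : 0 < c := by
    have : 0 < ‖x‖ := norm_pos_iff.mpr hx
    positivity
  set β : ℝ := -(lam / 2) - i with hβ
  set G : ℕ → ℝ → ℝ := fun k t => (qseq c β p k).eval t * (c + t ^ 2) ^ (β - k) with hG
  have hderiv : ∀ k t, HasDerivAt (G k) (G (k + 1) t) t := fun k t =>
    qseq_hasDerivAt c hc β p k t
  have hFeq : ∀ t : ℝ, P (x, t) * (c + t ^ 2) ^ (-(lam / 2) - (i : ℝ)) = G 0 t := by
    intro t
    show _ = (qseq c β p 0).eval t * (c + t ^ 2) ^ (β - (0:ℕ))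
    rw [show qseq c β p 0 = p from rfl, hpe t]
    norm_num
    exact Or.inl rfl
  have hGint : ∀ k, Integrable (G k) := by
    intro k
    apply integrable_poly_mul_rpow hc _ hlam
    have h1 : ((qseq c β p k).natDegree : ℝ) ≤ 2 * i + k := by
      exact_mod_cast le_trans (qseq_natDegree c β p k) (by omega)
    have h2 : (0:ℝ) ≤ k := Nat.cast_nonneg k
    rw [hβ]
    push_cast
    linarith
  have hGcont : Continuous (G 0) := by
    show Continuous fun t : ℝ => (qseq c β p 0).eval t * (c + t ^ 2) ^ (β - (0:ℕ))
    exact (Polynomial.continuous _).mul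
      (Continuous.rpow_const (by continuity) (fun t => Or.inl (by positivity)))
  set f : ℝ → ℂ := fun t => ((G 0 t : ℝ) : ℂ) with hf_def
  have hf0 : Integrable f := (hGint 0).ofReal
  have hdf : deriv f = fun t => ((G 1 t : ℝ) : ℂ) :=
    funext fun t => ((hderiv 0 t).ofReal_comp).deriv
  have hDiff : Differentiable ℝ f := fun t => ((hderiv 0 t).ofReal_comp).differentiableAt
  have hf1 : Integrable (deriv f) := by rw [hdf]; exact (hGint 1).ofReal
  have hDiff1 : Differentiable ℝ (deriv f) := by
    rw [hdf]; exact fun t => ((hderiv 1 t).ofReal_comp).differentiableAt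
  have hdf2 : deriv (deriv f) = fun t => ((G 2 t : ℝ) : ℂ) := by
    rw [hdf]; exact funext fun t => ((hderiv 1 t).ofReal_comp).deriv
  have hf2 : Integrable (deriv (deriv f)) := by rw [hdf2]; exact (hGint 2).ofReal
  have hF1 := Real.fourier_deriv hf0 hDiff hf1
  have hF2 := Real.fourier_deriv hf1 hDiff1 hf2
  have hcont : Continuous (𝓕 f) :=
    VectorFourier.fourierIntegral_continuous Real.continuous_fourierChar
      (by exact continuous_inner) hf0
  set B0 : ℝ := ∫ t : ℝ, ‖f t‖ with hB0
  set B2 : ℝ := ∫ t : ℝ, ‖deriv (deriv f) t‖ with hB2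
  have hπ : (0:ℝ) < π := Real.pi_pos
  have hkey : ∀ s : ℝ, ‖𝓕 f s‖ ≤ (B0 + B2 / (4 * π ^ 2)) * (1 + s ^ 2)⁻¹ := by
    intro s
    have h1 : ‖𝓕 f s‖ ≤ B0 :=
      VectorFourier.norm_fourierIntegral_le_integral_norm _ volume _ f s
    have h2 : 𝓕 (deriv (deriv f)) s
        = (2 * π * Complex.I * s) • ((2 * π * Complex.I * s) • 𝓕 f s) := by
      rw [hF2]
      congr 1
      rw [hF1]
    have h3 : ‖𝓕 (deriv (deriv f)) s‖ = (2 * π * |s|) ^ 2 * ‖𝓕 f s‖ := by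
      rw [h2, norm_smul, norm_smul]
      have hn : ‖(2 * (π:ℂ) * Complex.I * (s:ℂ) : ℂ)‖ = 2 * π * |s| := by
        simp [norm_mul, abs_of_pos hπ]
      rw [hn]
      ring
    have h4 : ‖𝓕 (deriv (deriv f)) s‖ ≤ B2 :=
      VectorFourier.norm_fourierIntegral_le_integral_norm _ volume _ _ s
    have h5 : 4 * π ^ 2 * s ^ 2 * ‖𝓕 f s‖ ≤ B2 := by
      rw [h3] at h4
      have he : (2 * π * |s|) ^ 2 = 4 * π ^ 2 * s ^ 2 := by
        rw [mul_pow, mul_pow, _root_.sq_abs]; ring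
      rw [he] at h4
      linarith
    have h6 : ‖𝓕 f s‖ * s ^ 2 ≤ B2 / (4 * π ^ 2) := by
      rw [le_div_iff₀ (by positivity)]
      nlinarith [h5]
    have hs : (0:ℝ) < 1 + s ^ 2 := by positivity
    rw [← div_eq_mul_inv, le_div_iff₀ hs]
    nlinarith [h1, h6]
  have h𝓕int : Integrable (𝓕 f) := by
    refine (integrable_inv_one_add_sq.const_mul (B0 + B2 / (4 * π ^ 2))).mono'
      hcont.aestronglyMeasurable (ae_of_all _ fun s => ?_)
    simpa using hkey s
  have hcontf : Continuous f := Complex.continuous_ofReal.comp hGcont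
  have hinv : 𝓕⁻ (𝓕 f) 0 = f 0 := hf0.fourierInv_fourier_eq h𝓕int hcontf.continuousAt
  have key2 : ∀ s : ℝ, (∫ t : ℝ,
      ((P (x, t) * (c + t ^ 2) ^ (-(lam / 2) - (i : ℝ)) : ℝ) : ℂ) *
        Complex.exp ((-(2 * π * s * t) : ℝ) * Complex.I)) = 𝓕 f s := by
    intro s
    rw [Real.fourier_eq']
    refine integral_congr_ae (ae_of_all _ fun t => ?_)
    dsimp only
    rw [hFeq t, smul_eq_mul, mul_comm]
    congr 2
    simp only [RCLike.inner_apply, conj_trivial]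
    push_cast
    ring
  refine ⟨?_, ?_, ?_⟩
  · exact (hGint 0).congr (ae_of_all _ fun t => (hFeq t).symm)
  · exact h𝓕int.congr (ae_of_all _ fun s => (key2 s).symm)
  · calc ∫ s : ℝ, (∫ t : ℝ,
        ((P (x, t) * (c + t ^ 2) ^ (-(lam / 2) - (i : ℝ)) : ℝ) : ℂ) *
          Complex.exp ((-(2 * π * s * t) : ℝ) * Complex.I))
        = ∫ s : ℝ, 𝓕 f s := by simp only [key2]
      _ = 𝓕⁻ (𝓕 f) 0 := by
          rw [Real.fourierInv_eq]
          simp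
      _ = f 0 := hinv
      _ = ((P (x, 0) * ‖x‖ ^ (-lam - 2 * (i : ℝ)) : ℝ) : ℂ) := by
          have hrw : (c + (0:ℝ) ^ 2) ^ (β - ((0:ℕ):ℝ)) = ‖x‖ ^ (-lam - 2 * (i : ℝ)) := by
            rw [hc_def, hβ]
            norm_num
            rw [← Real.rpow_natCast ‖x‖ 2, ← Real.rpow_mul (norm_nonneg x)]
            congr 1
            push_cast
            ring
          have hff : f 0 = ((G 0 0 : ℝ) : ℂ) := rfl
          rw [hff]
          have hG0 : G 0 0 = P (x, 0) * ‖x‖ ^ (-lam - 2 * (i : ℝ)) := by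
            show Polynomial.eval 0 (qseq c β p 0) * (c + (0:ℝ) ^ 2) ^ (β - ((0:ℕ):ℝ)) = _
            rw [show qseq c β p 0 = p from rfl, hrw, hpe 0]
          rw [hG0]
end
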